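/- For s > 0, ∫₀^∞ (r²/sinh²(r)) e^{−sr} dr = Φ'(s/2) + (s/4) Φ''(s/2), where Φ is the digamma function. -/

import Mathlib

open MeasureTheory Set Real

/-- The digamma function `Φ(z) = Γ'(z)/Γ(z) = (log ∘ Γ)'(z)`. -/
noncomputable def digamma : ℝ → ℝ := deriv (fun x => Real.log (Real.Gamma x))

open Filter Topology Nat

lemma summable_pow_shift {x : ℝ} (hx : 0 < x) {p : ℕ} (hp : 1 < p) :
    Summable (fun n : ℕ => 1 / ((n : ℝ) + x) ^ p) := by
  have h := (Real.summable_one_div_nat_add_rpow x p).mpr (by exact_mod_cast hp)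
  refine h.congr fun n => ?_
  rw [abs_of_pos (by positivity), Real.rpow_natCast]

lemma sub_log_nonneg {t : ℝ} (ht : 0 ≤ t) : 0 ≤ t - Real.log (1 + t) := by
  have := Real.log_le_sub_one_of_pos (show (0:ℝ) < 1 + t by linarith)
  linarith

lemma sub_log_le_sq {t : ℝ} (ht : 0 ≤ t) : t - Real.log (1 + t) ≤ t ^ 2 := by
  have h1 : (0:ℝ) < 1 + t := by linarith
  have h2 := Real.log_le_sub_one_of_pos (show (0:ℝ) < (1 + t)⁻¹ by positivity)
  rw [Real.log_inv] at h2
  have h3 : -Real.log (1 + t) ≤ (1 + t)⁻¹ - 1 := h2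
  have h4 : (1 + t)⁻¹ - 1 = -t / (1 + t) := by field_simp; ring
  have h5 : t - t / (1 + t) ≤ t ^ 2 := by
    have e : t - t / (1 + t) = t ^ 2 / (1 + t) := by field_simp; ring
    rw [e]
    calc t ^ 2 / (1 + t) ≤ t ^ 2 / 1 :=
          div_le_div_of_nonneg_left (sq_nonneg t) one_pos (by linarith)
        _ = t ^ 2 := by rw [div_one]
  rw [h4] at h3
  have h6 : -t / (1 + t) = -(t / (1+t)) := by ring
  rw [h6] at h3
  linarith

lemma summable_g {x : ℝ} (hx : 0 < x) :
    Summable (fun n : ℕ => x / ((n:ℝ) + 1) - Real.log (1 + x / ((n:ℝ) + 1))) := by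
  have hb : Summable (fun n : ℕ => x ^ 2 * (1 / ((n:ℝ) + 1) ^ 2)) :=
    (summable_pow_shift one_pos one_lt_two).mul_left _
  refine Summable.of_nonneg_of_le (fun n => sub_log_nonneg (by positivity)) (fun n => ?_) hb
  have := sub_log_le_sq (show (0:ℝ) ≤ x / ((n:ℝ)+1) by positivity)
  calc x / ((n:ℝ) + 1) - Real.log (1 + x / ((n:ℝ) + 1)) ≤ (x / ((n:ℝ)+1))^2 := this
    _ = x ^ 2 * (1 / ((n:ℝ) + 1) ^ 2) := by rw [div_pow]; ring

lemma harmonic_cast (N : ℕ) : ((harmonic N : ℚ) : ℝ) = ∑ n ∈ Finset.range N, 1 / ((n : ℝ) + 1) := by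
  rw [harmonic]
  push_cast
  exact Finset.sum_congr rfl fun n _ => by rw [one_div]

lemma log_fact (N : ℕ) : Real.log (N !) = ∑ n ∈ Finset.range N, Real.log ((n : ℝ) + 1) := by
  induction N with
  | zero => simp
  | succ n ih =>
    rw [Finset.sum_range_succ, ← ih, Nat.factorial_succ, Nat.cast_mul,
      Real.log_mul (by positivity) (by exact_mod_cast n.factorial_pos.ne')]
    push_cast
    ring

noncomputable def Lfun (x : ℝ) : ℝ := ∑' n : ℕ, (x / ((n:ℝ) + 1) - Real.log (1 + x / ((n:ℝ) + 1)))
noncomputable def Dfun (x : ℝ) : ℝ := ∑' n : ℕ, (1 / ((n:ℝ) + 1) - 1 / ((n:ℝ) + 1 + x))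

lemma hasDerivAt_term (n : ℕ) {y : ℝ} (hy : 0 < y) :
    HasDerivAt (fun z => z / ((n:ℝ) + 1) - Real.log (1 + z / ((n:ℝ) + 1)))
      (1 / ((n:ℝ) + 1) - 1 / ((n:ℝ) + 1 + y)) y := by
  set c : ℝ := (n:ℝ) + 1 with hc
  have hc0 : 0 < c := by positivity
  have h1 : HasDerivAt (fun z : ℝ => 1 + z / c) (1 / c) y := by
    simpa [one_div] using ((hasDerivAt_id y).div_const c).const_add 1
  have h2 : (1 : ℝ) + y / c ≠ 0 := by positivity
  have h3 := ((hasDerivAt_id y).div_const c).sub (h1.log h2)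
  convert h3 using 1
  · rfl
  · rfl
  · rfl
  have hcy : c + y ≠ 0 := by positivity
  field_simp

lemma term_bound {x : ℝ} (hx : 0 < x) (n : ℕ) {y : ℝ} (hy0 : 0 < y) (hy1 : y ≤ x) :
    ‖1 / ((n:ℝ) + 1) - 1 / ((n:ℝ) + 1 + y)‖ ≤ x * (1 / ((n:ℝ) + 1) ^ 2) := by
  set c : ℝ := (n:ℝ) + 1 with hc
  have hc0 : 0 < c := by positivity
  have hcy : 0 < c + y := by linarith
  have e : 1 / c - 1 / (c + y) = y / (c * (c + y)) := by field_simp; ring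
  rw [e, Real.norm_eq_abs, abs_of_nonneg (by positivity)]
  calc y / (c * (c + y)) ≤ x / (c * c) := by
        apply div_le_div₀ (by positivity) hy1 (by positivity)
        nlinarith
    _ = x * (1 / c ^ 2) := by rw [mul_one_div, pow_two]

lemma hasDerivAt_Lfun {x : ℝ} (hx : 0 < x) : HasDerivAt Lfun (Dfun x) x := by
  have := hasDerivAt_tsum_of_isPreconnected
    (u := fun n : ℕ => (x + 1) * (1 / ((n:ℝ) + 1) ^ 2))
    (g := fun (n : ℕ) (z : ℝ) => z / ((n:ℝ) + 1) - Real.log (1 + z / ((n:ℝ) + 1)))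
    (g' := fun (n : ℕ) (y : ℝ) => 1 / ((n:ℝ) + 1) - 1 / ((n:ℝ) + 1 + y))
    (t := Ioo 0 (x + 1)) (y₀ := x) (y := x)
    ((summable_pow_shift one_pos one_lt_two).mul_left _)
    isOpen_Ioo (convex_Ioo _ _).isPreconnected
    (fun n y hy => hasDerivAt_term n hy.1)
    (fun n y hy => term_bound (by linarith) n hy.1 hy.2.le)
    ⟨hx, lt_add_one x⟩ (summable_g hx) ⟨hx, lt_add_one x⟩
  exact this

lemma key_logGamma {x : ℝ} (hx : 0 < x) :
    Real.log (Real.Gamma x) = Lfun x - Real.eulerMascheroniConstant * x - Real.log x := by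
  have hsum := summable_g hx
  have h1 : Tendsto (fun N => ∑ n ∈ Finset.range N,
      (x / ((n:ℝ) + 1) - Real.log (1 + x / ((n:ℝ) + 1)))) atTop (𝓝 (Lfun x)) :=
    hsum.hasSum.tendsto_sum_nat
  have h2 : ∀ N : ℕ, ∑ n ∈ Finset.range N, (x / ((n:ℝ) + 1) - Real.log (1 + x / ((n:ℝ) + 1)))
      = Real.BohrMollerup.logGammaSeq x N + x * (((harmonic N : ℚ) : ℝ) - Real.log N)
        + Real.log x := by
    intro N
    have e1 : ∀ n ∈ Finset.range N, x / ((n:ℝ) + 1) - Real.log (1 + x / ((n:ℝ) + 1))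
        = x * (1 / ((n:ℝ) + 1)) - (Real.log (x + ((n:ℝ) + 1)) - Real.log ((n:ℝ) + 1)) := by
      intro n _
      have hn : (0:ℝ) < (n:ℝ) + 1 := by positivity
      have : (1 : ℝ) + x / ((n:ℝ) + 1) = (x + ((n:ℝ) + 1)) / ((n:ℝ) + 1) := by field_simp; ring
      rw [this, Real.log_div (by positivity) hn.ne']
      ring
    rw [Finset.sum_congr rfl e1, Finset.sum_sub_distrib, ← Finset.mul_sum,
      Finset.sum_sub_distrib, ← harmonic_cast, ← log_fact,
      Real.BohrMollerup.logGammaSeq]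
    have e2 : ∑ n ∈ Finset.range N, Real.log (x + ((n:ℝ) + 1))
        = ∑ m ∈ Finset.range (N + 1), Real.log (x + (m:ℝ)) - Real.log x := by
      rw [Finset.sum_range_succ' (fun m => Real.log (x + (m:ℝ))) N]
      push_cast
      simp
    rw [e2]
    ring
  have h3 : Tendsto (fun N : ℕ => Real.BohrMollerup.logGammaSeq x N
      + x * (((harmonic N : ℚ) : ℝ) - Real.log N) + Real.log x) atTop
      (𝓝 (Real.log (Real.Gamma x) + x * Real.eulerMascheroniConstant + Real.log x)) := by
    exact ((Real.BohrMollerup.tendsto_log_gamma hx).add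
      (Real.tendsto_harmonic_sub_log.const_mul x)).add tendsto_const_nhds
  have h4 := tendsto_nhds_unique (h1.congr h2) h3
  rw [h4]; ring

noncomputable def Efun (x : ℝ) : ℝ := ∑' n : ℕ, 1 / ((n:ℝ) + x) ^ 2
noncomputable def Ffun (x : ℝ) : ℝ := ∑' n : ℕ, 1 / ((n:ℝ) + x) ^ 3

lemma digamma_eq {x : ℝ} (hx : 0 < x) :
    digamma x = Dfun x - Real.eulerMascheroniConstant - 1 / x := by
  have hev : (fun y => Real.log (Real.Gamma y)) =ᶠ[𝓝 x]
      (fun y => Lfun y - Real.eulerMascheroniConstant * y - Real.log y) := by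
    filter_upwards [isOpen_Ioi.mem_nhds hx] with y hy
    exact key_logGamma hy
  have hlog : HasDerivAt Real.log x⁻¹ x := Real.hasDerivAt_log hx.ne'
  have h : HasDerivAt (fun y => Lfun y - Real.eulerMascheroniConstant * y - Real.log y)
      (Dfun x - Real.eulerMascheroniConstant - 1 / x) x := by
    have := ((hasDerivAt_Lfun hx).sub
      ((hasDerivAt_id x).const_mul Real.eulerMascheroniConstant)).sub hlog
    exact this.congr_deriv (by simp [one_div])
  rw [digamma, hev.deriv_eq, h.deriv]

lemma summable_Dterm {x : ℝ} (hx : 0 < x) :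
    Summable (fun n : ℕ => 1 / ((n:ℝ) + 1) - 1 / ((n:ℝ) + 1 + x)) := by
  have hb : Summable (fun n : ℕ => x * (1 / ((n:ℝ) + 1) ^ 2)) :=
    (summable_pow_shift one_pos one_lt_two).mul_left _
  refine Summable.of_nonneg_of_le (fun n => ?_) (fun n => ?_) hb
  · have h1 : (0:ℝ) < (n:ℝ) + 1 := by positivity
    have h2 : (0:ℝ) < (n:ℝ) + 1 + x := by positivity
    have : 1 / ((n:ℝ) + 1 + x) ≤ 1 / ((n:ℝ) + 1) :=
      div_le_div_of_nonneg_left one_pos.le h1 (by linarith)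
    linarith
  · have h1 : (0:ℝ) < (n:ℝ) + 1 := by positivity
    have h2 : (0:ℝ) < (n:ℝ) + 1 + x := by positivity
    have e : 1 / ((n:ℝ) + 1) - 1 / ((n:ℝ) + 1 + x) = x / (((n:ℝ) + 1) * (((n:ℝ) + 1) + x)) := by
      field_simp; ring
    rw [e]
    calc x / (((n:ℝ) + 1) * (((n:ℝ) + 1) + x)) ≤ x / (((n:ℝ) + 1) * ((n:ℝ) + 1)) :=
          div_le_div_of_nonneg_left hx.le (by positivity) (by nlinarith)
      _ = x * (1 / ((n:ℝ) + 1) ^ 2) := by rw [mul_one_div, pow_two]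

lemma hasDerivAt_Dfun {x : ℝ} (hx : 0 < x) :
    HasDerivAt Dfun (∑' n : ℕ, 1 / ((n:ℝ) + 1 + x) ^ 2) x := by
  have key : ∀ (n : ℕ) (y : ℝ), 0 < y →
      HasDerivAt (fun z : ℝ => 1 / ((n:ℝ) + 1) - 1 / ((n:ℝ) + 1 + z))
        (1 / ((n:ℝ) + 1 + y) ^ 2) y := by
    intro n y hy
    have hc : ((n:ℝ) + 1 + y) ≠ 0 := by positivity
    have h1 : HasDerivAt (fun z : ℝ => (n:ℝ) + 1 + z) 1 y := (hasDerivAt_id y).const_add _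
    have h2 := (h1.inv hc).const_sub (1 / ((n:ℝ) + 1))
    convert h2 using 1
    · rfl
    · rfl
    · funext z; simp only [one_div, Pi.inv_apply]
    · field_simp
  refine hasDerivAt_tsum_of_isPreconnected
    (u := fun n : ℕ => 1 / ((n:ℝ) + 1) ^ 2)
    (t := Ioi 0) (y₀ := x) (y := x)
    (summable_pow_shift one_pos one_lt_two)
    isOpen_Ioi isPreconnected_Ioi
    (fun n y hy => key n y hy) (fun n y hy => ?_) hx (summable_Dterm hx) hx
  have h1 : (0:ℝ) < (n:ℝ) + 1 := by positivity
  have h2 : (0:ℝ) < (n:ℝ) + 1 + y := by have : (0:ℝ) < y := hy; positivity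
  rw [Real.norm_eq_abs, abs_of_nonneg (by positivity)]
  apply div_le_div_of_nonneg_left one_pos.le (by positivity)
  have : (0:ℝ) < y := hy
  nlinarith

lemma deriv_digamma_eq {x : ℝ} (hx : 0 < x) : deriv digamma x = Efun x := by
  have hev : digamma =ᶠ[𝓝 x]
      (fun y => Dfun y - Real.eulerMascheroniConstant - 1 / y) := by
    filter_upwards [isOpen_Ioi.mem_nhds hx] with y hy
    exact digamma_eq hy
  have hinv : HasDerivAt (fun y : ℝ => 1 / y) (-(1 / x ^ 2)) x := by
    simpa [one_div] using hasDerivAt_inv hx.ne'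
  have h : HasDerivAt (fun y => Dfun y - Real.eulerMascheroniConstant - 1 / y) (Efun x) x := by
    have h0 := ((hasDerivAt_Dfun hx).sub_const Real.eulerMascheroniConstant).sub hinv
    convert h0 using 1
    · rfl
    · rfl
    · rfl
    have hsum : Summable (fun n : ℕ => 1 / ((n:ℝ) + x) ^ 2) := summable_pow_shift hx one_lt_two
    rw [Efun, hsum.tsum_eq_zero_add, sub_neg_eq_add, add_comm]
    congr 1
    · refine tsum_congr fun n => ?_
      push_cast
      ring_nf
    · norm_num
  rw [hev.deriv_eq, h.deriv]

lemma hasDerivAt_Efun {x : ℝ} (hx : 0 < x) : HasDerivAt Efun (-2 * Ffun x) x := by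
  have key : ∀ (n : ℕ) (y : ℝ), 0 < y →
      HasDerivAt (fun z : ℝ => 1 / ((n:ℝ) + z) ^ 2) (-(2 * (1 / ((n:ℝ) + y) ^ 3))) y := by
    intro n y hy
    have hc : ((n:ℝ) + y) ≠ 0 := by positivity
    have h1 : HasDerivAt (fun z : ℝ => ((n:ℝ) + z) ^ 2) (2 * ((n:ℝ) + y) ^ 1 * 1) y :=
      (((hasDerivAt_id y).const_add ((n:ℝ))).pow 2)
    have h2 := h1.inv (by positivity)
    convert h2 using 1
    · rfl
    · rfl
    · funext z; rw [one_div]; rfl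
    · field_simp
  have h := hasDerivAt_tsum_of_isPreconnected
    (u := fun n : ℕ => 2 * (1 / ((n:ℝ) + x / 2) ^ 3))
    (g := fun (n : ℕ) (z : ℝ) => 1 / ((n:ℝ) + z) ^ 2)
    (g' := fun (n : ℕ) (y : ℝ) => -(2 * (1 / ((n:ℝ) + y) ^ 3)))
    (t := Ioo (x / 2) (x + 1)) (y₀ := x) (y := x)
    ((summable_pow_shift (half_pos hx) (by norm_num : 1 < 3)).mul_left _)
    isOpen_Ioo (convex_Ioo _ _).isPreconnected
    (fun n y hy => key n y (lt_trans (half_pos hx) hy.1))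
    (fun n y hy => ?_)
    ⟨half_lt_self hx, lt_add_one x⟩ (summable_pow_shift hx one_lt_two)
    ⟨half_lt_self hx, lt_add_one x⟩
  · have e : (∑' n : ℕ, -(2 * (1 / ((n:ℝ) + x) ^ 3))) = -2 * Ffun x := by
      rw [tsum_neg, tsum_mul_left, Ffun]
      ring
    rw [e] at h
    exact h
  · have hy0 : (0:ℝ) < y := lt_trans (half_pos hx) hy.1
    have h2 : (0:ℝ) < (n:ℝ) + y := by positivity
    have h3 : (0:ℝ) < (n:ℝ) + x / 2 := by positivity
    rw [Real.norm_eq_abs, abs_neg, abs_of_nonneg (by positivity)]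
    have : 1 / ((n:ℝ) + y) ^ 3 ≤ 1 / ((n:ℝ) + x / 2) ^ 3 := by
      apply div_le_div_of_nonneg_left one_pos.le (by positivity)
      exact pow_le_pow_left₀ h3.le (by linarith [hy.1]) 3
    linarith

lemma deriv_deriv_digamma_eq {x : ℝ} (hx : 0 < x) :
    deriv (deriv digamma) x = -2 * Ffun x := by
  have hev : deriv digamma =ᶠ[𝓝 x] Efun := by
    filter_upwards [isOpen_Ioi.mem_nhds hx] with y hy
    exact deriv_digamma_eq hy
  rw [hev.deriv_eq, (hasDerivAt_Efun hx).deriv]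

lemma integral_sq_exp {a : ℝ} (ha : 0 < a) :
    ∫ r in Ioi (0:ℝ), r ^ 2 * Real.exp (-a * r) = 2 / a ^ 3 := by
  have h := Real.integral_rpow_mul_exp_neg_mul_Ioi (by norm_num : (0:ℝ) < 3) ha
  have e1 : ∀ t : ℝ, t ^ ((3:ℝ) - 1) = t ^ 2 := by
    intro t
    rw [show (3:ℝ) - 1 = ((2:ℕ):ℝ) by norm_num, Real.rpow_natCast]
  have e2 : (∫ t in Ioi (0:ℝ), t ^ ((3:ℝ) - 1) * Real.exp (-(a * t)))
      = ∫ r in Ioi (0:ℝ), r ^ 2 * Real.exp (-a * r) := by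
    refine setIntegral_congr_fun measurableSet_Ioi fun t _ => ?_
    rw [e1, neg_mul]
  rw [e2] at h
  rw [h]
  have e3 : Real.Gamma 3 = 2 := by
    rw [show (3:ℝ) = ((2:ℕ):ℝ) + 1 by norm_num, Real.Gamma_nat_eq_factorial]
    norm_num
  rw [e3, show (3:ℝ) = ((3:ℕ):ℝ) by norm_num, Real.rpow_natCast]
  rw [div_pow, one_pow]
  ring

lemma integrable_sq_exp {a : ℝ} (ha : 0 < a) :
    IntegrableOn (fun r : ℝ => r ^ 2 * Real.exp (-a * r)) (Ioi 0) := by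
  have h := integrableOn_rpow_mul_exp_neg_mul_rpow (p := 1) (s := 2) (b := a)
    (by norm_num) one_pos ha
  refine h.congr_fun (fun x _ => ?_) measurableSet_Ioi
  dsimp only
  rw [Real.rpow_one, show ((2:ℝ)) = ((2:ℕ):ℝ) by norm_num, Real.rpow_natCast]

lemma sinh_expand {s r : ℝ} (hr : 0 < r) :
    HasSum (fun k : ℕ => 4 * ((k:ℝ) + 1) * (r ^ 2 * Real.exp (-(2 * ((k:ℝ) + 1) + s) * r)))
      (r ^ 2 / (Real.sinh r) ^ 2 * Real.exp (-s * r)) := by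
  set q : ℝ := Real.exp (-(2 * r)) with hq
  have hq0 : 0 < q := Real.exp_pos _
  have hq1 : q < 1 := Real.exp_lt_one_iff.mpr (by linarith)
  have hs1 : HasSum (fun k : ℕ => (((k + 1).choose 1 : ℕ) : ℝ) * q ^ k) (1 / (1 - q) ^ 2) :=
    hasSum_choose_mul_geometric_of_norm_lt_one 1 (by rw [Real.norm_eq_abs, abs_of_pos hq0]; exact hq1)
  have hs2 := hs1.mul_left (4 * r ^ 2 * q * Real.exp (-s * r))
  have hterm : ∀ k : ℕ, 4 * r ^ 2 * q * Real.exp (-s * r) * ((((k + 1).choose 1 : ℕ) : ℝ) * q ^ k)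
      = 4 * ((k:ℝ) + 1) * (r ^ 2 * Real.exp (-(2 * ((k:ℝ) + 1) + s) * r)) := by
    intro k
    rw [Nat.choose_one_right]
    have hpow : q ^ k = Real.exp (-(2 * r) * k) := by
      rw [hq, ← Real.exp_nat_mul]
      ring_nf
    rw [hpow, hq,
      show -(2 * ((k:ℝ) + 1) + s) * r = -(2 * r) + (-(2 * r) * (k:ℝ) + -s * r) by ring,
      Real.exp_add, Real.exp_add]
    push_cast
    ring
  have hval : 4 * r ^ 2 * q * Real.exp (-s * r) * (1 / (1 - q) ^ 2)
      = r ^ 2 / (Real.sinh r) ^ 2 * Real.exp (-s * r) := by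
    have hsh : Real.sinh r = (Real.exp r - Real.exp (-r)) / 2 := Real.sinh_eq r
    have hE : Real.exp r ≠ 0 := (Real.exp_pos r).ne'
    have h1 : Real.exp (-r) = (Real.exp r)⁻¹ := Real.exp_neg r
    have h2 : q = ((Real.exp r)⁻¹) ^ 2 := by
      rw [hq, ← h1, ← Real.exp_nat_mul]
      norm_num
    have hsh0 : Real.sinh r ≠ 0 := (Real.sinh_pos_iff.mpr hr).ne'
    have h3 : (1 - q) ^ 2 = (Real.sinh r) ^ 2 * (4 * q) := by
      rw [hsh, h1, h2]
      field_simp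
      ring
    rw [h3]
    field_simp
  rw [← hval]
  exact hs2.congr_fun fun k => (hterm k).symm



/-- `∫₀^∞ (r²/sinh²r) e^{−sr} dr = Φ'(s/2) + (s/4) Φ''(s/2)`
for `s > 0`, where `Φ` is the digamma function. -/
theorem stmt_16 (s : ℝ) (hs : 0 < s) :
    ∫ r in Ioi (0:ℝ), (r^2 / (Real.sinh r)^2) * Real.exp (-s * r)
      = deriv digamma (s/2) + (s/4) * deriv (deriv digamma) (s/2) := by
  have hw0 : 0 < s / 2 := half_pos hs
  set w : ℝ := s / 2 with hw
  rw [deriv_digamma_eq hw0, deriv_deriv_digamma_eq hw0]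
  set F : ℕ → ℝ → ℝ :=
    fun k r => 4 * ((k:ℝ) + 1) * (r ^ 2 * Real.exp (-(2 * ((k:ℝ) + 1) + s) * r)) with hF
  have ha : ∀ k : ℕ, (0:ℝ) < 2 * ((k:ℝ) + 1) + s := fun k => by positivity
  have hww : ∀ k : ℕ, (0:ℝ) < (k:ℝ) + 1 + w := fun k => by positivity
  have hFint : ∀ k : ℕ, Integrable (F k) (volume.restrict (Ioi 0)) := fun k =>
    (integrable_sq_exp (ha k)).const_mul _
  have hFval : ∀ k : ℕ, ∫ r in Ioi (0:ℝ), F k r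
      = 1 / ((k:ℝ) + 1 + w) ^ 2 - (s / 2) * (1 / ((k:ℝ) + 1 + w) ^ 3) := by
    intro k
    rw [hF]
    simp only []
    rw [MeasureTheory.integral_const_mul, integral_sq_exp (ha k)]
    have h2 : 2 * ((k:ℝ) + 1) + s = 2 * ((k:ℝ) + 1 + w) := by rw [hw]; ring
    rw [h2]
    have hkw := (hww k).ne'
    field_simp
    ring
  have hFnorm : ∀ k : ℕ, (∫ r in Ioi (0:ℝ), ‖F k r‖) = ∫ r in Ioi (0:ℝ), F k r := by
    intro k
    refine integral_congr_ae (Eventually.of_forall fun r => ?_)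
    have h0 : 0 ≤ F k r := by rw [hF]; positivity
    simp only [Real.norm_eq_abs, abs_of_nonneg h0]
  have hsummable_main : Summable (fun k : ℕ => 1 / ((k:ℝ) + 1 + w) ^ 2
      - (s / 2) * (1 / ((k:ℝ) + 1 + w) ^ 3)) := by
    have h1 : Summable (fun k : ℕ => 1 / ((k:ℝ) + 1 + w) ^ 2) := by
      refine (summable_pow_shift (show (0:ℝ) < 1 + w by linarith) one_lt_two).congr fun k => ?_
      rw [add_assoc]
    have h2 : Summable (fun k : ℕ => 1 / ((k:ℝ) + 1 + w) ^ 3) := by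
      refine (summable_pow_shift (show (0:ℝ) < 1 + w by linarith) (by norm_num : 1 < 3)).congr
        fun k => ?_
      rw [add_assoc]
    exact h1.sub (h2.mul_left _)
  have hnorm : Summable fun k : ℕ => ∫ r in Ioi (0:ℝ), ‖F k r‖ := by
    refine hsummable_main.congr fun k => ?_
    rw [hFnorm k, hFval k]
  have hswap : ∫ r in Ioi (0:ℝ), (r^2 / (Real.sinh r)^2) * Real.exp (-s * r)
      = ∑' k : ℕ, ∫ r in Ioi (0:ℝ), F k r := by
    rw [setIntegral_congr_fun measurableSet_Ioi
      (fun r (hr : r ∈ Ioi (0:ℝ)) => ((sinh_expand hr).tsum_eq).symm)]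
    exact (MeasureTheory.integral_tsum_of_summable_integral_norm hFint hnorm).symm
  rw [hswap, tsum_congr hFval]
  -- now compute the sum
  have hE : Summable (fun n : ℕ => 1 / ((n:ℝ) + w) ^ 2) := summable_pow_shift hw0 one_lt_two
  have hFsum : Summable (fun n : ℕ => 1 / ((n:ℝ) + w) ^ 3) :=
    summable_pow_shift hw0 (by norm_num : 1 < 3)
  have hEeq : Efun w = 1 / w ^ 2 + ∑' n : ℕ, 1 / ((n:ℝ) + 1 + w) ^ 2 := by
    rw [Efun, hE.tsum_eq_zero_add]
    congr 1
    · norm_num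
    · refine tsum_congr fun n => ?_
      push_cast
      ring_nf
  have hFeq : Ffun w = 1 / w ^ 3 + ∑' n : ℕ, 1 / ((n:ℝ) + 1 + w) ^ 3 := by
    rw [Ffun, hFsum.tsum_eq_zero_add]
    congr 1
    · norm_num
    · refine tsum_congr fun n => ?_
      push_cast
      ring_nf
  have h1 : Summable (fun k : ℕ => 1 / ((k:ℝ) + 1 + w) ^ 2) := by
    refine (summable_pow_shift (show (0:ℝ) < 1 + w by linarith) one_lt_two).congr fun k => ?_
    rw [add_assoc]
  have h2 : Summable (fun k : ℕ => 1 / ((k:ℝ) + 1 + w) ^ 3) := by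
    refine (summable_pow_shift (show (0:ℝ) < 1 + w by linarith) (by norm_num : 1 < 3)).congr
      fun k => ?_
    rw [add_assoc]
  rw [Summable.tsum_sub h1 (h2.mul_left _), tsum_mul_left]
  have hzero : 1 / w ^ 2 - (s / 2) * (1 / w ^ 3) = 0 := by
    have hs2 : s = 2 * w := by rw [hw]; ring
    rw [hs2]
    field_simp
    ring
  have e : Efun w + s / 4 * (-2 * Ffun w)
      = (1 / w ^ 2 - (s / 2) * (1 / w ^ 3))
        + ((∑' n : ℕ, 1 / ((n:ℝ) + 1 + w) ^ 2) - s / 2 * ∑' n : ℕ, 1 / ((n:ℝ) + 1 + w) ^ 3) := by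
    rw [hEeq, hFeq]
    ring
  rw [e, hzero, zero_add]
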